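/- arXiv:1308.1827 — 2 statements merged into one kernel-verified Lean document; each statement's English description precedes it below -/
import Mathlib

section
/- Let c(P,L) = Π_{𝐒⊥}(vec(PL) − vec(S_0)) with S_0 = 0, i.e., c(P,L) = Π_{𝐒⊥} vec(PL). Then every stationary point of the function (P,L) ↦ ||c(P,L)||_2^2 is feasible, i.e., if the gradient of ||c(P,L)||_2^2 with respect to (P,L) vanishes, then c(P,L) = 0. -/
open Matrix Kronecker

/-- Column-major vectorization of a matrix. -/
def mvec {m n : ℕ} (X : Matrix (Fin m) (Fin n) ℝ) : Fin n × Fin m → ℝ :=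
  fun q => X q.2 q.1

lemma mvec_mul {m n r : ℕ} (P : Matrix (Fin m) (Fin r) ℝ) (L : Matrix (Fin r) (Fin n) ℝ) :
    mvec (P * L) = ((1 : Matrix (Fin n) (Fin n) ℝ) ⊗ₖ P) *ᵥ mvec L := by
  ext ⟨j, i⟩
  simp [mvec, mulVec, dotProduct, Matrix.mul_apply, Fintype.sum_prod_type,
    Matrix.one_apply, ite_mul, Finset.sum_ite_eq]

/-- With `S₀ = 0`, the penalty vector is `c(P,L) = Π_{𝐒⊥} vec(PL)` and its
Jacobian is `Π_{𝐒⊥}[Lᵀ ⊗ I_m, I_n ⊗ P]`. Every stationary point of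
`‖c(P,L)‖₂²` (i.e., a point where `J_cᵀ c = 0`) is feasible: `c(P,L) = 0`. -/
theorem stmt9 {m n r np : ℕ}
    (Pi : Matrix (Fin n × Fin m) (Fin n × Fin m) ℝ)
    (hsym : Piᵀ = Pi) (hidem : Pi * Pi = Pi)
    (P : Matrix (Fin m) (Fin r) ℝ) (L : Matrix (Fin r) (Fin n) ℝ)
    (hstat : (Pi *ᵥ mvec (P * L)) ᵥ*
        (Pi * Matrix.fromCols
          (Lᵀ ⊗ₖ (1 : Matrix (Fin m) (Fin m) ℝ))
          ((1 : Matrix (Fin n) (Fin n) ℝ) ⊗ₖ P)) = 0) :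
    Pi *ᵥ mvec (P * L) = 0 := by
  set B := ((1 : Matrix (Fin n) (Fin n) ℝ) ⊗ₖ P) with hBdef
  set v := Pi *ᵥ mvec (P * L) with hv
  have hPiB : v ᵥ* (Pi * B) = 0 := by
    funext j
    have := congrFun hstat (Sum.inr j)
    rwa [Matrix.mul_fromCols, Matrix.vecMul_fromCols] at this
  have key : v ⬝ᵥ v = 0 := by
    have h1 : v ⬝ᵥ v = (v ᵥ* (Pi * B)) ⬝ᵥ mvec L := by
      rw [hv, mvec_mul, ← hBdef]
      rw [Matrix.dotProduct_mulVec, Matrix.dotProduct_mulVec, Matrix.vecMul_vecMul]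
    rw [h1, hPiB, zero_dotProduct]
  exact dotProduct_self_eq_zero.mp key
end

section
/- Three monic-degree-n polynomials a, b, c (viewed via their coefficient vectors) have a nontrivial common divisor of degree at least d ≥ 1 if and only if the stacked generalized Sylvester matrix [S_n(a); S_n(b); S_n(c)] has rank at most 2n − d, where S_k(a) is the k×(n+k) banded multiplication (convolution) matrix of a. Equivalently, the rank deficiency of the stacked matrix equals the degree of the greatest common divisor of a, b, c. -/
open Matrix Polynomial

/-- The `k × (nn + k)` banded multiplication (convolution) matrix of a
polynomial of degree `nn`: row `i` contains the coefficients shifted by `i`. -/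
noncomputable def SylMul (nn k : ℕ) (a : Polynomial ℝ) :
    Matrix (Fin k) (Fin (nn + k)) ℝ :=
  fun i j => if (i : ℕ) ≤ (j : ℕ) ∧ (j : ℕ) - (i : ℕ) ≤ nn then
    a.coeff ((j : ℕ) - (i : ℕ)) else 0

open Submodule

/-- The submodule of multiples of `f` by polynomials of degree `< k`. -/
noncomputable def mulLT (f : Polynomial ℝ) (k : ℕ) : Submodule ℝ (Polynomial ℝ) :=
  (degreeLT ℝ k).map (LinearMap.mulLeft ℝ f)

lemma mem_mulLT {f q : Polynomial ℝ} {k : ℕ} :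
    q ∈ mulLT f k ↔ ∃ h : Polynomial ℝ, h.degree < (k : WithBot ℕ) ∧ f * h = q := by
  simp [mulLT, Submodule.mem_map, mem_degreeLT, LinearMap.mulLeft_apply]

lemma finrank_degreeLT' (k : ℕ) : Module.finrank ℝ (degreeLT ℝ k) = k := by
  rw [(Polynomial.degreeLTEquiv ℝ k).finrank_eq]
  exact Module.finrank_fin_fun ℝ

lemma finrank_mulLT {f : Polynomial ℝ} (hf : f ≠ 0) (k : ℕ) :
    Module.finrank ℝ (mulLT f k) = k := by
  have hinj : Function.Injective ((LinearMap.mulLeft ℝ f).comp (degreeLT ℝ k).subtype) := by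
    intro x y hxy
    simp only [LinearMap.comp_apply, LinearMap.mulLeft_apply, coe_subtype] at hxy
    exact Subtype.ext (mul_left_cancel₀ hf hxy)
  have h2 := LinearMap.finrank_range_of_inj hinj
  rw [LinearMap.range_comp, Submodule.range_subtype] at h2
  rw [mulLT, h2, finrank_degreeLT']

lemma mulLT_le_degreeLT (f : Polynomial ℝ) (k : ℕ) :
    mulLT f k ≤ degreeLT ℝ (f.natDegree + k) := by
  intro q hq
  obtain ⟨h, hh, rfl⟩ := mem_mulLT.1 hq
  rw [mem_degreeLT]
  calc (f * h).degree ≤ f.degree + h.degree := degree_mul_le f h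
    _ < (f.natDegree : WithBot ℕ) + k := by
        apply lt_of_le_of_lt (add_le_add (degree_le_natDegree) le_rfl)
        exact WithBot.add_lt_add_left (by exact_mod_cast WithBot.coe_ne_bot) hh
    _ = ((f.natDegree + k : ℕ) : WithBot ℕ) := by push_cast; rfl

lemma mulLT_le_mulLT {g f : Polynomial ℝ} (hf : f ≠ 0) (hgf : g ∣ f) {e : ℕ}
    (hfe : f.natDegree ≤ e) :
    mulLT f (e - f.natDegree) ≤ mulLT g (e - g.natDegree) := by
  obtain ⟨f', rfl⟩ := hgf
  have hg : g ≠ 0 := left_ne_zero_of_mul hf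
  have hf' : f' ≠ 0 := right_ne_zero_of_mul hf
  intro q hq
  obtain ⟨h, hh, rfl⟩ := mem_mulLT.1 hq
  refine mem_mulLT.2 ⟨f' * h, ?_, by ring⟩
  by_cases h0 : h = 0
  · rw [h0, mul_zero, degree_zero]
    exact WithBot.bot_lt_coe _
  · rw [← natDegree_lt_iff_degree_lt (mul_ne_zero hf' h0)]
    have hh' := (natDegree_lt_iff_degree_lt h0).2 hh
    have hdm := natDegree_mul hg hf'
    rw [natDegree_mul hf' h0]
    omega

/-- The key Sylvester-type submodule identity: if `deg f₁ + deg f₂ ≤ e` then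
`f₁·P_{<e-deg f₁} + f₂·P_{<e-deg f₂} = gcd(f₁,f₂)·P_{<e-deg gcd}`. -/
lemma sup_mulLT (f₁ f₂ : Polynomial ℝ) (h₁ : f₁ ≠ 0) (h₂ : f₂ ≠ 0) {e : ℕ}
    (he : f₁.natDegree + f₂.natDegree ≤ e) :
    mulLT f₁ (e - f₁.natDegree) ⊔ mulLT f₂ (e - f₂.natDegree)
      = mulLT (EuclideanDomain.gcd f₁ f₂) (e - (EuclideanDomain.gcd f₁ f₂).natDegree) := by
  set G := EuclideanDomain.gcd f₁ f₂ with hGdef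
  have hG0 : G ≠ 0 := fun h => h₁ ((EuclideanDomain.gcd_eq_zero_iff.1 h).1)
  obtain ⟨f₁', hf1⟩ := EuclideanDomain.gcd_dvd_left f₁ f₂
  obtain ⟨f₂', hf2⟩ := EuclideanDomain.gcd_dvd_right f₁ f₂
  have h₁' : f₁' ≠ 0 := fun h => h₁ (by rw [hf1, h, mul_zero])
  have h₂' : f₂' ≠ 0 := fun h => h₂ (by rw [hf2, h, mul_zero])
  have hd1 : f₁.natDegree = G.natDegree + f₁'.natDegree := by rw [hf1, natDegree_mul hG0 h₁']
  have hd2 : f₂.natDegree = G.natDegree + f₂'.natDegree := by rw [hf2, natDegree_mul hG0 h₂']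
  apply le_antisymm
  · exact sup_le (mulLT_le_mulLT h₁ ⟨f₁', hf1⟩ (by omega))
      (mulLT_le_mulLT h₂ ⟨f₂', hf2⟩ (by omega))
  · intro q hq
    obtain ⟨h, hh, rfl⟩ := mem_mulLT.1 hq
    by_cases h0 : h = 0
    · rw [h0, mul_zero]; exact zero_mem _
    have hhn : h.natDegree < e - G.natDegree := (natDegree_lt_iff_degree_lt h0).2 hh
    set A := EuclideanDomain.gcdA f₁ f₂ with hA
    set B := EuclideanDomain.gcdB f₁ f₂ with hB
    have hbez : f₁' * A + f₂' * B = 1 := by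
      have hab : G = f₁ * A + f₂ * B := EuclideanDomain.gcd_eq_gcd_ab f₁ f₂
      apply mul_left_cancel₀ hG0
      rw [mul_one]
      linear_combination -A * hf1 - B * hf2 - hab
    by_cases hc : f₂'.natDegree = 0
    · -- `f₂'` is a nonzero constant
      have ht : f₂'.coeff 0 ≠ 0 := by
        intro h'
        exact h₂' (by rw [eq_C_of_natDegree_eq_zero hc, h', map_zero])
      refine mem_sup_right (mem_mulLT.2 ⟨C (f₂'.coeff 0)⁻¹ * h, ?_, ?_⟩)
      · rw [degree_mul, degree_C (inv_ne_zero ht), zero_add,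
          ← natDegree_lt_iff_degree_lt h0]
        omega
      · rw [hf2]
        nth_rewrite 1 [eq_C_of_natDegree_eq_zero hc]
        rw [mul_assoc, ← mul_assoc (C (f₂'.coeff 0)), ← C_mul,
          mul_inv_cancel₀ ht, C_1, one_mul]
    · -- general case
      set t := f₂'.leadingCoeff with htdef
      have ht : t ≠ 0 := leadingCoeff_ne_zero.2 h₂'
      set F := f₂' * C t⁻¹ with hF
      have hFm : F.Monic := monic_mul_leadingCoeff_inv h₂'
      have hFdeg : F.natDegree = f₂'.natDegree := by
        rw [hF, natDegree_mul h₂' (C_ne_zero.2 (inv_ne_zero ht)), natDegree_C, add_zero]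
      set u := (h * A) %ₘ F with hu
      set qq := (h * A) /ₘ F with hqq
      have hmod : u + F * qq = h * A := modByMonic_add_div _ _
      have hdu : u.degree < F.degree := degree_modByMonic_lt _ hFm
      set w := C t⁻¹ * qq * f₁' + h * B with hw
      have key : f₁ * u + f₂ * w = G * h := by
        rw [hw]
        linear_combination u * hf1 + (C t⁻¹ * qq * f₁' + h * B) * hf2 -
          G * qq * f₁' * hF + G * f₁' * hmod + G * h * hbez
      have hun : u ≠ 0 → u.natDegree < f₂'.natDegree := by
        intro u0
        rw [natDegree_lt_iff_degree_lt u0, ← hFdeg, ← degree_eq_natDegree hFm.ne_zero]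
        exact hdu
      have hu_mem : u.degree < ((e - f₁.natDegree : ℕ) : WithBot ℕ) := by
        by_cases u0 : u = 0
        · rw [u0, degree_zero]; exact WithBot.bot_lt_coe _
        · rw [← natDegree_lt_iff_degree_lt u0]
          have := hun u0
          omega
      have hw_mem : w.degree < ((e - f₂.natDegree : ℕ) : WithBot ℕ) := by
        by_cases hw0 : w = 0
        · rw [hw0, degree_zero]; exact WithBot.bot_lt_coe _
        have h1 : (f₂ * w).degree < (e : WithBot ℕ) := by
          have heq : f₂ * w = G * h - f₁ * u := by linear_combination key
          rw [heq]
          refine lt_of_le_of_lt (degree_sub_le _ _) (max_lt ?_ ?_)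
          · rw [← natDegree_lt_iff_degree_lt (mul_ne_zero hG0 h0), natDegree_mul hG0 h0]
            omega
          · by_cases u0 : u = 0
            · rw [u0, mul_zero, degree_zero]; exact WithBot.bot_lt_coe _
            · rw [← natDegree_lt_iff_degree_lt (mul_ne_zero h₁ u0), natDegree_mul h₁ u0]
              have := hun u0
              omega
        rw [← natDegree_lt_iff_degree_lt (mul_ne_zero h₂ hw0), natDegree_mul h₂ hw0] at h1
        rw [← natDegree_lt_iff_degree_lt hw0]
        omega
      rw [← key]
      exact add_mem_sup (mem_mulLT.2 ⟨u, hu_mem, rfl⟩) (mem_mulLT.2 ⟨w, hw_mem, rfl⟩)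

/-- The linear map sending a polynomial to its first `N` coefficients. -/
noncomputable def coeffMap (N : ℕ) : Polynomial ℝ →ₗ[ℝ] (Fin N → ℝ) :=
  LinearMap.pi fun i => lcoeff ℝ (i : ℕ)

lemma span_range_mul_X_pow (f : Polynomial ℝ) (k : ℕ) :
    Submodule.span ℝ (Set.range fun i : Fin k => f * X ^ (i : ℕ)) = mulLT f k := by
  classical
  rw [mulLT, degreeLT_eq_span_X_pow, Submodule.map_span]
  congr 1
  ext p
  simp only [Set.mem_range, Set.mem_image, Finset.coe_image, Finset.mem_coe,
    Finset.mem_range, LinearMap.mulLeft_apply, Set.mem_image]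
  constructor
  · rintro ⟨i, rfl⟩
    exact ⟨X ^ (i : ℕ), ⟨i, i.2, rfl⟩, rfl⟩
  · rintro ⟨q, ⟨i, hi, rfl⟩, rfl⟩
    exact ⟨⟨i, hi⟩, rfl⟩

lemma sylmul_row (f : Polynomial ℝ) {n : ℕ} (hf : f.natDegree = n) (i : Fin n) :
    SylMul n n f i = coeffMap (n + n) (f * X ^ (i : ℕ)) := by
  funext j
  simp only [SylMul, coeffMap, LinearMap.pi_apply, lcoeff_apply, coeff_mul_X_pow']
  by_cases h1 : (i : ℕ) ≤ (j : ℕ)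
  · by_cases h2 : (j : ℕ) - (i : ℕ) ≤ n
    · simp [h1, h2]
    · simp only [h1, h2, and_false, if_false, if_true]
      exact (coeff_eq_zero_of_natDegree_lt (by omega)).symm
  · simp [h1]

/-- Three monic degree-`n` real polynomials `a, b, c` have a common divisor of
degree at least `d ≥ 1` iff the stacked generalized Sylvester matrix
`[Sₙ(a); Sₙ(b); Sₙ(c)]` has rank at most `2n − d`; moreover its rank
deficiency equals the degree of `gcd(a, b, c)`. -/
theorem stmt19 {n d : ℕ} (hd : 1 ≤ d) (hdn : d ≤ n)
    (a b c : Polynomial ℝ)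
    (ha : a.Monic) (hb : b.Monic) (hc : c.Monic)
    (hna : a.natDegree = n) (hnb : b.natDegree = n) (hnc : c.natDegree = n) :
    ∀ M : Matrix ((Fin n ⊕ Fin n) ⊕ Fin n) (Fin (n + n)) ℝ,
      M = Matrix.fromRows (Matrix.fromRows (SylMul n n a) (SylMul n n b))
            (SylMul n n c) →
      ((∃ g : Polynomial ℝ, d ≤ g.natDegree ∧ g ∣ a ∧ g ∣ b ∧ g ∣ c) ↔
        M.rank ≤ 2 * n - d) ∧
      2 * n - M.rank =
        (EuclideanDomain.gcd a (EuclideanDomain.gcd b c)).natDegree := by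
  intro M hM
  have ha0 : a ≠ 0 := ha.ne_zero
  have hb0 : b ≠ 0 := hb.ne_zero
  have hc0 : c ≠ 0 := hc.ne_zero
  set g₂ := EuclideanDomain.gcd b c with hg₂def
  set G := EuclideanDomain.gcd a g₂ with hGdef
  have hg₂0 : g₂ ≠ 0 := fun h => hb0 ((EuclideanDomain.gcd_eq_zero_iff.1 h).1)
  have hG0 : G ≠ 0 := fun h => ha0 ((EuclideanDomain.gcd_eq_zero_iff.1 h).1)
  have hg₂b : g₂ ∣ b := EuclideanDomain.gcd_dvd_left b c
  have hg₂c : g₂ ∣ c := EuclideanDomain.gcd_dvd_right b c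
  have hGa : G ∣ a := EuclideanDomain.gcd_dvd_left a g₂
  have hGg₂ : G ∣ g₂ := EuclideanDomain.gcd_dvd_right a g₂
  have hGb : G ∣ b := hGg₂.trans hg₂b
  have hGc : G ∣ c := hGg₂.trans hg₂c
  have hg₂n : g₂.natDegree ≤ n := hnb ▸ natDegree_le_of_dvd hg₂b hb0
  have hGn : G.natDegree ≤ n := hna ▸ natDegree_le_of_dvd hGa ha0
  -- the rank computation
  have hrank : M.rank = n + n - G.natDegree := by
    rw [hM, Matrix.rank_eq_finrank_span_row]
    set P : (Fin n ⊕ Fin n) ⊕ Fin n → Polynomial ℝ :=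
      Sum.elim (Sum.elim (fun i : Fin n => a * X ^ (i : ℕ)) (fun i : Fin n => b * X ^ (i : ℕ)))
        (fun i : Fin n => c * X ^ (i : ℕ)) with hP
    have hMfun : Matrix.fromRows (Matrix.fromRows (SylMul n n a) (SylMul n n b))
        (SylMul n n c) = (⇑(coeffMap (n + n)) ∘ P) := by
      funext r
      rcases r with (i | i) | i
      · exact sylmul_row a hna i
      · exact sylmul_row b hnb i
      · exact sylmul_row c hnc i
    rw [hMfun]
    change Module.finrank ℝ (span ℝ (Set.range (⇑(coeffMap (n + n)) ∘ P))) = _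
    rw [Set.range_comp, Submodule.span_image]
    have hspanP : Submodule.span ℝ (Set.range P) = mulLT G (n + n - G.natDegree) := by
      rw [hP, Set.Sum.elim_range, Set.Sum.elim_range, Set.union_assoc, Submodule.span_union,
        Submodule.span_union, span_range_mul_X_pow, span_range_mul_X_pow,
        span_range_mul_X_pow]
      have e1 : n = n + n - a.natDegree := by omega
      have e2 : n = n + n - b.natDegree := by omega
      have e3 : n = n + n - c.natDegree := by omega
      calc mulLT a n ⊔ (mulLT b n ⊔ mulLT c n)
          = mulLT a (n + n - a.natDegree) ⊔
              (mulLT b (n + n - b.natDegree) ⊔ mulLT c (n + n - c.natDegree)) := by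
            rw [← e1, ← e2, ← e3]
        _ = mulLT a (n + n - a.natDegree) ⊔ mulLT g₂ (n + n - g₂.natDegree) := by
            rw [sup_mulLT b c hb0 hc0 (by omega)]
        _ = mulLT G (n + n - G.natDegree) := sup_mulLT a g₂ ha0 hg₂0 (by omega)
    rw [hspanP]
    have hWle : mulLT G (n + n - G.natDegree) ≤ degreeLT ℝ (n + n) := by
      refine le_trans (mulLT_le_degreeLT _ _) (degreeLT_mono ?_)
      omega
    have hker : Function.Injective
        ((coeffMap (n + n)).comp (mulLT G (n + n - G.natDegree)).subtype) := by
      rw [← LinearMap.ker_eq_bot, LinearMap.ker_eq_bot']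
      intro x hx
      have hxd : (x : Polynomial ℝ) ∈ degreeLT ℝ (n + n) := hWle x.2
      have hx0 : (x : Polynomial ℝ) = 0 := by
        ext j
        rw [coeff_zero]
        by_cases hj : j < n + n
        · have := congrFun hx ⟨j, hj⟩
          simpa [coeffMap] using this
        · refine coeff_eq_zero_of_degree_lt (lt_of_lt_of_le (mem_degreeLT.1 hxd) ?_)
          rw [Nat.cast_withBot, Nat.cast_withBot]
          exact WithBot.coe_le_coe.2 (by omega)
      exact Subtype.ext hx0
    have hfr := LinearMap.finrank_range_of_inj hker
    rw [LinearMap.range_comp, Submodule.range_subtype] at hfr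
    rw [hfr, finrank_mulLT hG0]
  refine ⟨⟨?_, ?_⟩, by omega⟩
  · rintro ⟨g, hdg, hga, hgb, hgc⟩
    have hgG : g ∣ G := EuclideanDomain.dvd_gcd hga (EuclideanDomain.dvd_gcd hgb hgc)
    have := natDegree_le_of_dvd hgG hG0
    omega
  · intro hr
    exact ⟨G, by omega, hGa, hGb, hGc⟩
end
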